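/- arXiv:0808.1936 — 8 statements merged into one kernel-verified Lean document; each statement's English description precedes it below -/
import Mathlib

section
/- For every n ≥ 1 and all x, ξ ∈ [0,1], both Δ_n(ξ)/Δ_n(x) and Δ_n(x)/Δ_n(ξ) are at most 2(1 + |x−ξ|/Δ_n(x)). -/
noncomputable def Delta (n : ℕ) (x : ℝ) : ℝ :=
  max (Real.sqrt (x * (1 - x) / n)) (1 / n)

theorem stmt_0 (n : ℕ) (hn : 1 ≤ n) (x ξ : ℝ)
    (hx : x ∈ Set.Icc (0:ℝ) 1) (hξ : ξ ∈ Set.Icc (0:ℝ) 1) :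
    Delta n ξ / Delta n x ≤ 2 * (1 + |x - ξ| / Delta n x) ∧
    Delta n x / Delta n ξ ≤ 2 * (1 + |x - ξ| / Delta n x) := by
  obtain ⟨hx0, hx1⟩ := hx
  obtain ⟨hξ0, hξ1⟩ := hξ
  have hnpos : (0:ℝ) < n := by exact_mod_cast Nat.lt_of_lt_of_le Nat.zero_lt_one hn
  have hA1 : 1/(n:ℝ) ≤ Delta n x := le_max_right _ _
  have hB1 : 1/(n:ℝ) ≤ Delta n ξ := le_max_right _ _
  have hApos : 0 < Delta n x := lt_of_lt_of_le (by positivity) hA1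
  have hBpos : 0 < Delta n ξ := lt_of_lt_of_le (by positivity) hB1
  set A := Delta n x
  set B := Delta n ξ
  set d := |x - ξ| with hd
  have hd0 : 0 ≤ d := abs_nonneg _
  have key : ∀ a b : ℝ, 0 ≤ a → a ≤ 1 → 0 ≤ b → b ≤ 1 →
      (Delta n a)^2 ≤ (Delta n b)^2 + |a - b| / n := by
    intro a b ha0 ha1 hb0 hb1
    have hb1' : 1/(n:ℝ) ≤ Delta n b := le_max_right _ _
    have hbpos : 0 < Delta n b := lt_of_lt_of_le (by positivity) hb1'
    have hbnn : 0 ≤ b * (1 - b) / n := by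
      have : 0 ≤ b * (1 - b) := mul_nonneg hb0 (by linarith)
      positivity
    have hann : 0 ≤ a * (1 - a) / n := by
      have : 0 ≤ a * (1 - a) := mul_nonneg ha0 (by linarith)
      positivity
    have hbsq : b * (1 - b) / n ≤ (Delta n b)^2 := by
      have h1 : Real.sqrt (b * (1 - b) / n) ≤ Delta n b := le_max_left _ _
      have := Real.sq_sqrt hbnn
      nlinarith [Real.sqrt_nonneg (b * (1 - b) / n)]
    have hmul : a * (1 - a) ≤ b * (1 - b) + |a - b| := by
      rcases abs_cases (a - b) with ⟨h, _⟩ | ⟨h, _⟩ <;> nlinarith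
    rcases max_cases (Real.sqrt (a * (1 - a) / n)) (1/(n:ℝ)) with ⟨h, _⟩ | ⟨h, _⟩
    · have hasq : (Delta n a)^2 = a * (1 - a) / n := by
        show (max (Real.sqrt (a * (1 - a) / n)) (1/(n:ℝ)))^2 = _
        rw [h, Real.sq_sqrt hann]
      rw [hasq]
      have : a * (1 - a) / n ≤ b * (1 - b) / n + |a - b| / n := by
        rw [← add_div, div_le_div_iff₀ hnpos hnpos]
        nlinarith
      have h0 : (0:ℝ) ≤ |a - b| / n := by positivity
      linarith
    · have hasq : (Delta n a)^2 = 1 / (n:ℝ)^2 := by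
        show (max (Real.sqrt (a * (1 - a) / n)) (1/(n:ℝ)))^2 = _
        rw [h]; field_simp
      rw [hasq]
      have : 1 / (n:ℝ)^2 ≤ (Delta n b)^2 := by
        have : (1/(n:ℝ))^2 ≤ (Delta n b)^2 := by
          apply pow_le_pow_left₀ (by positivity) hb1'
        calc 1 / (n:ℝ)^2 = (1/(n:ℝ))^2 := by ring
        _ ≤ _ := this
      have h0 : (0:ℝ) ≤ |a - b| / n := by positivity
      linarith
  have k1 : B^2 ≤ A^2 + d / n := by
    have := key ξ x hξ0 hξ1 hx0 hx1
    rwa [abs_sub_comm, ← hd] at this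
  have k2 : A^2 ≤ B^2 + d / n := key x ξ hx0 hx1 hξ0 hξ1
  have hdn : d / n ≤ d * A := by
    calc d / n = d * (1/n) := by ring
    _ ≤ d * A := mul_le_mul_of_nonneg_left hA1 hd0
  have hdn' : d / n ≤ d * B := by
    calc d / n = d * (1/n) := by ring
    _ ≤ d * B := mul_le_mul_of_nonneg_left hB1 hd0
  have hBA : B ≤ A + d := by nlinarith
  constructor
  · rw [div_le_iff₀ hApos]
    have h2 : 2 * (1 + d / A) * A = 2 * A + 2 * d := by field_simp
    rw [h2]; linarith
  · rw [div_le_iff₀ hBpos]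
    have h2 : 2 * (1 + d / A) * B = (2 * A * B + 2 * d * B) / A := by field_simp
    rw [h2, le_div_iff₀ hApos]
    nlinarith [mul_le_mul_of_nonneg_right hBA hBpos.le, mul_nonneg hd0 hBpos.le]
end

section
/- For every β ≥ 0 there is a constant C(β) such that for all n ≥ 1 and all x ∈ [0,1], ∑_{k=0}^n |k/n − x|^β · C(n,k) x^k (1−x)^{n−k} ≤ C(β) · Δ_n(x)^β. -/
open Real Finset

lemma exp_quad {u : ℝ} (hu : |u| ≤ 1) : Real.exp u ≤ 1 + u + u ^ 2 := by
  have h := Real.exp_bound hu (n := 2) (by norm_num)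
  have h2 : ∑ m ∈ range 2, u ^ m / m.factorial = 1 + u := by
    simp [Finset.sum_range_succ]
  rw [h2] at h
  norm_num [Nat.factorial] at h
  have := (abs_sub_le_iff.1 h).1
  have hu2 : |u| ^ 2 = u ^ 2 := sq_abs u
  nlinarith [sq_nonneg u]

lemma mgf_bound (n : ℕ) (x l : ℝ) (hx0 : 0 ≤ x) (hx1 : x ≤ 1) (hl : |l| ≤ 1)
    (h2 : n * l ^ 2 * (x * (1 - x)) ≤ 1) :
    ∑ k ∈ range (n + 1), Real.exp (l * (k - n * x)) * ((n.choose k : ℝ) * x ^ k * (1 - x) ^ (n - k))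
      ≤ Real.exp 1 := by
  have key : ∑ k ∈ range (n + 1),
      Real.exp (l * (k - n * x)) * ((n.choose k : ℝ) * x ^ k * (1 - x) ^ (n - k))
      = (x * Real.exp (l * (1 - x)) + (1 - x) * Real.exp (-(l * x))) ^ n := by
    rw [add_pow]
    refine Finset.sum_congr rfl fun k hk => ?_
    have hkn : k ≤ n := Nat.lt_succ_iff.mp (Finset.mem_range.mp hk)
    have hsplit : Real.exp (l * (k - n * x))
        = Real.exp (l * (1 - x)) ^ k * Real.exp (-(l * x)) ^ (n - k) := by
      rw [← Real.exp_nat_mul, ← Real.exp_nat_mul, ← Real.exp_add]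
      congr 1
      have : ((n - k : ℕ) : ℝ) = (n : ℝ) - k := by
        push_cast [hkn]; ring
      rw [this]; ring
    rw [hsplit, mul_pow, mul_pow]
    ring
  rw [key]
  have hb1 : Real.exp (l * (1 - x)) ≤ 1 + l * (1 - x) + (l * (1 - x)) ^ 2 := by
    apply exp_quad
    rw [abs_mul]
    calc |l| * |1 - x| ≤ 1 * 1 := by
          apply mul_le_mul hl _ (abs_nonneg _) zero_le_one
          rw [abs_le]; constructor <;> linarith
      _ = 1 := by norm_num
  have hb2 : Real.exp (-(l * x)) ≤ 1 + (-(l * x)) + (-(l * x)) ^ 2 := by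
    apply exp_quad
    rw [abs_neg, abs_mul]
    calc |l| * |x| ≤ 1 * 1 := by
          apply mul_le_mul hl _ (abs_nonneg _) zero_le_one
          rw [abs_le]; constructor <;> linarith
      _ = 1 := by norm_num
  have hbase : x * Real.exp (l * (1 - x)) + (1 - x) * Real.exp (-(l * x))
      ≤ 1 + l ^ 2 * (x * (1 - x)) := by
    nlinarith [Real.exp_pos (l * (1 - x)), Real.exp_pos (-(l * x))]
  have hnn : 0 ≤ x * Real.exp (l * (1 - x)) + (1 - x) * Real.exp (-(l * x)) := by
    have := (Real.exp_pos (l * (1 - x))).le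
    have := (Real.exp_pos (-(l * x))).le
    nlinarith
  calc (x * Real.exp (l * (1 - x)) + (1 - x) * Real.exp (-(l * x))) ^ n
      ≤ (1 + l ^ 2 * (x * (1 - x))) ^ n := pow_le_pow_left₀ hnn hbase n
    _ ≤ (Real.exp (l ^ 2 * (x * (1 - x)))) ^ n := by
        apply pow_le_pow_left₀ (by nlinarith)
        exact Real.add_one_le_exp _ |>.trans_eq' (by ring) |>.trans_eq rfl
    _ = Real.exp (n * (l ^ 2 * (x * (1 - x)))) := by rw [← Real.exp_nat_mul]
    _ ≤ Real.exp 1 := Real.exp_le_exp.mpr (by nlinarith)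

lemma Delta_pos {n : ℕ} (hn : 1 ≤ n) (x : ℝ) : 0 < Delta n x :=
  lt_max_of_lt_right (by positivity)

lemma moment_bound (m n : ℕ) (hn : 1 ≤ n) (x : ℝ) (hx0 : 0 ≤ x) (hx1 : x ≤ 1) :
    ∑ k ∈ range (n + 1), ((k : ℝ) / n - x) ^ (2 * m) * ((n.choose k : ℝ) * x ^ k * (1 - x) ^ (n - k))
      ≤ 2 * Real.exp 1 * (2 * m).factorial * Delta n x ^ (2 * m) := by
  have hn0 : (0 : ℝ) < n := by exact_mod_cast hn
  have hΔ : 0 < Delta n x := Delta_pos hn x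
  set l : ℝ := 1 / (n * Delta n x) with hl_def
  have hnΔ1 : 1 ≤ n * Delta n x := by
    have : (1 : ℝ) / n ≤ Delta n x := le_max_right _ _
    calc (1 : ℝ) = n * (1 / n) := by field_simp
      _ ≤ n * Delta n x := by apply mul_le_mul_of_nonneg_left this hn0.le
  have hl_pos : 0 < l := by positivity
  have hl1 : l ≤ 1 := by
    rw [hl_def, div_le_one (by positivity)]; exact hnΔ1
  have habs : |l| ≤ 1 := by rwa [abs_of_pos hl_pos]
  have hvar : n * l ^ 2 * (x * (1 - x)) ≤ 1 := by
    have h1 : Real.sqrt (x * (1 - x) / n) ≤ Delta n x := le_max_left _ _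
    have h2 : x * (1 - x) / n ≤ Delta n x ^ 2 := by
      have h1x : (0:ℝ) ≤ 1 - x := by linarith
      have := Real.sq_sqrt (by positivity : (0:ℝ) ≤ x * (1 - x) / n)
      nlinarith [Real.sqrt_nonneg (x * (1 - x) / n), hΔ]
    have : n * (x * (1 - x)) ≤ (n * Delta n x) ^ 2 := by
      have h3 := mul_le_mul_of_nonneg_left h2 (by positivity : (0:ℝ) ≤ (n:ℝ) ^ 2)
      have h4 : (n:ℝ) ^ 2 * (x * (1 - x) / n) = n * (x * (1 - x)) := by
        field_simp
      nlinarith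
    have hpos : (0:ℝ) < (n * Delta n x) ^ 2 := pow_pos (mul_pos hn0 hΔ) 2
    calc (n:ℝ) * l ^ 2 * (x * (1 - x))
        = n * (x * (1 - x)) / (n * Delta n x) ^ 2 := by
          rw [hl_def]; field_simp
      _ ≤ 1 := by rw [div_le_one hpos]; exact this
  -- pointwise bound
  have hfac : (0:ℝ) < (2 * m).factorial := by exact_mod_cast (Nat.factorial_pos _)
  have hpt : ∀ u : ℝ, u ^ (2 * m) ≤ (2 * m).factorial * (Real.exp u + Real.exp (-u)) := by
    intro u
    have h1 : |u| ^ (2 * m) / (2 * m).factorial ≤ Real.exp |u| :=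
      Real.pow_div_factorial_le_exp _ (abs_nonneg u) _
    have h2 : Real.exp |u| ≤ Real.exp u + Real.exp (-u) := by
      rcases abs_cases u with ⟨h, _⟩ | ⟨h, _⟩ <;> rw [h] <;>
        [linarith [(Real.exp_pos (-u)).le]; linarith [(Real.exp_pos u).le]]
    have h3 : u ^ (2 * m) = |u| ^ (2 * m) := by
      rw [pow_mul, pow_mul, sq_abs]
    rw [h3]
    rw [div_le_iff₀ hfac] at h1
    calc |u| ^ (2 * m) ≤ Real.exp |u| * (2 * m).factorial := h1
      _ ≤ (2 * m).factorial * (Real.exp u + Real.exp (-u)) := by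
          rw [mul_comm]; exact mul_le_mul_of_nonneg_left h2 hfac.le
  have hBnn : ∀ k, (0:ℝ) ≤ (n.choose k : ℝ) * x ^ k * (1 - x) ^ (n - k) := by
    intro k; have : (0:ℝ) ≤ 1 - x := by linarith
    positivity
  have hterm : ∀ k ∈ range (n + 1),
      ((k : ℝ) / n - x) ^ (2 * m) * ((n.choose k : ℝ) * x ^ k * (1 - x) ^ (n - k))
      ≤ Delta n x ^ (2 * m) * ((2 * m).factorial *
          ((Real.exp (l * (k - n * x)) + Real.exp (-(l * (k - n * x))))
            * ((n.choose k : ℝ) * x ^ k * (1 - x) ^ (n - k)))) := by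
    intro k _
    have hrepr : ((k : ℝ) / n - x) = Delta n x * (l * (k - n * x)) := by
      rw [hl_def]; field_simp
    rw [hrepr, mul_pow]
    calc Delta n x ^ (2 * m) * (l * ((k:ℝ) - n * x)) ^ (2 * m) * ((n.choose k : ℝ) * x ^ k * (1 - x) ^ (n - k))
        = Delta n x ^ (2 * m) * ((l * ((k:ℝ) - n * x)) ^ (2 * m) * ((n.choose k : ℝ) * x ^ k * (1 - x) ^ (n - k))) := by ring
      _ ≤ Delta n x ^ (2 * m) * (((2 * m).factorial * (Real.exp (l * ((k:ℝ) - n * x)) + Real.exp (-(l * ((k:ℝ) - n * x))))) * ((n.choose k : ℝ) * x ^ k * (1 - x) ^ (n - k))) := by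
          apply mul_le_mul_of_nonneg_left _ (pow_nonneg hΔ.le _)
          exact mul_le_mul_of_nonneg_right (hpt _) (hBnn k)
      _ = Delta n x ^ (2 * m) * ((2 * m).factorial * ((Real.exp (l * ((k:ℝ) - n * x)) + Real.exp (-(l * ((k:ℝ) - n * x)))) * ((n.choose k : ℝ) * x ^ k * (1 - x) ^ (n - k)))) := by ring
  calc ∑ k ∈ range (n + 1), ((k : ℝ) / n - x) ^ (2 * m) * ((n.choose k : ℝ) * x ^ k * (1 - x) ^ (n - k))
      ≤ ∑ k ∈ range (n + 1), Delta n x ^ (2 * m) * ((2 * m).factorial *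
          ((Real.exp (l * (k - n * x)) + Real.exp (-(l * (k - n * x))))
            * ((n.choose k : ℝ) * x ^ k * (1 - x) ^ (n - k)))) := Finset.sum_le_sum hterm
    _ = Delta n x ^ (2 * m) * ((2 * m).factorial *
          ((∑ k ∈ range (n + 1), Real.exp (l * (k - n * x)) * ((n.choose k : ℝ) * x ^ k * (1 - x) ^ (n - k)))
          + ∑ k ∈ range (n + 1), Real.exp ((-l) * (k - n * x)) * ((n.choose k : ℝ) * x ^ k * (1 - x) ^ (n - k)))) := by
        rw [← Finset.mul_sum, ← Finset.mul_sum, ← Finset.sum_add_distrib]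
        congr 1; congr 1
        refine Finset.sum_congr rfl fun k _ => ?_
        rw [neg_mul]; ring
    _ ≤ Delta n x ^ (2 * m) * ((2 * m).factorial * (Real.exp 1 + Real.exp 1)) := by
        apply mul_le_mul_of_nonneg_left _ (by positivity)
        apply mul_le_mul_of_nonneg_left _ hfac.le
        have m1 := mgf_bound n x l hx0 hx1 habs hvar
        have m2 := mgf_bound n x (-l) hx0 hx1 (by rwa [abs_neg]) (by rwa [neg_sq])
        exact add_le_add m1 m2
    _ = 2 * Real.exp 1 * (2 * m).factorial * Delta n x ^ (2 * m) := by ring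

lemma bern_sum (n : ℕ) (x : ℝ) :
    ∑ k ∈ range (n + 1), ((n.choose k : ℝ) * x ^ k * (1 - x) ^ (n - k)) = 1 := by
  have h := add_pow x (1 - x) n
  calc ∑ k ∈ range (n + 1), ((n.choose k : ℝ) * x ^ k * (1 - x) ^ (n - k))
      = ∑ k ∈ range (n + 1), x ^ k * (1 - x) ^ (n - k) * (n.choose k : ℝ) :=
        Finset.sum_congr rfl fun k _ => by ring
    _ = (x + (1 - x)) ^ n := h.symm
    _ = 1 := by norm_num

theorem stmt_3 (β : ℝ) (hβ : 0 ≤ β) :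
    ∃ C : ℝ, ∀ n : ℕ, 1 ≤ n → ∀ x ∈ Set.Icc (0:ℝ) 1,
      ∑ k ∈ Finset.range (n + 1),
        |(k : ℝ) / n - x| ^ β * ((n.choose k : ℝ) * x ^ k * (1 - x) ^ (n - k))
      ≤ C * Delta n x ^ β := by
  set m : ℕ := ⌈β / 2⌉₊ with hm
  have hβm : β ≤ (2 * m : ℕ) := by
    have := Nat.le_ceil (β / 2)
    push_cast
    linarith
  refine ⟨1 + 2 * Real.exp 1 * (2 * m).factorial, fun n hn x hx => ?_⟩
  obtain ⟨hx0, hx1⟩ := hx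
  have hΔ : 0 < Delta n x := Delta_pos hn x
  have hΔ2m : (0:ℝ) < Delta n x ^ (2 * m) := pow_pos hΔ _
  set c : ℝ := Delta n x ^ β / Delta n x ^ (2 * m) with hc
  have hcnn : 0 ≤ c := div_nonneg (Real.rpow_nonneg hΔ.le β) hΔ2m.le
  have hBnn : ∀ k, (0:ℝ) ≤ (n.choose k : ℝ) * x ^ k * (1 - x) ^ (n - k) := by
    intro k; have : (0:ℝ) ≤ 1 - x := by linarith
    positivity
  have hpt : ∀ t : ℝ, |t| ^ β ≤ Delta n x ^ β + c * t ^ (2 * m) := by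
    intro t
    set r : ℝ := |t| / Delta n x with hr
    have hrnn : 0 ≤ r := div_nonneg (abs_nonneg t) hΔ.le
    have h1 : |t| ^ β = Delta n x ^ β * r ^ β := by
      rw [hr, ← Real.mul_rpow hΔ.le hrnn]
      congr 1
      rw [mul_comm, div_mul_cancel₀ _ hΔ.ne']
    have h2 : r ^ β ≤ 1 + r ^ (2 * m) := by
      rcases le_or_gt r 1 with h | h
      · have := Real.rpow_le_one hrnn h hβ
        have : (0:ℝ) ≤ r ^ (2 * m) := pow_nonneg hrnn _
        linarith [Real.rpow_le_one hrnn (by linarith : r ≤ 1) hβ]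
      · have h3 : r ^ β ≤ r ^ ((2 * m : ℕ) : ℝ) :=
          Real.rpow_le_rpow_of_exponent_le h.le hβm
        rw [Real.rpow_natCast] at h3
        have : (0:ℝ) ≤ r ^ (2 * m) := pow_nonneg hrnn _
        linarith
    have h4 : Delta n x ^ β * r ^ (2 * m) = c * t ^ (2 * m) := by
      rw [hr, div_pow, hc]
      have ht : |t| ^ (2 * m) = t ^ (2 * m) := by rw [pow_mul, pow_mul, sq_abs]
      rw [ht]
      ring
    calc |t| ^ β = Delta n x ^ β * r ^ β := h1
      _ ≤ Delta n x ^ β * (1 + r ^ (2 * m)) :=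
          mul_le_mul_of_nonneg_left h2 (Real.rpow_nonneg hΔ.le β)
      _ = Delta n x ^ β + Delta n x ^ β * r ^ (2 * m) := by ring
      _ = Delta n x ^ β + c * t ^ (2 * m) := by rw [h4]
  calc ∑ k ∈ Finset.range (n + 1),
        |(k : ℝ) / n - x| ^ β * ((n.choose k : ℝ) * x ^ k * (1 - x) ^ (n - k))
      ≤ ∑ k ∈ Finset.range (n + 1),
        (Delta n x ^ β + c * ((k : ℝ) / n - x) ^ (2 * m)) * ((n.choose k : ℝ) * x ^ k * (1 - x) ^ (n - k)) := by
        refine Finset.sum_le_sum fun k _ => ?_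
        exact mul_le_mul_of_nonneg_right (hpt _) (hBnn k)
    _ = Delta n x ^ β * (∑ k ∈ Finset.range (n + 1), ((n.choose k : ℝ) * x ^ k * (1 - x) ^ (n - k)))
        + c * ∑ k ∈ Finset.range (n + 1), ((k : ℝ) / n - x) ^ (2 * m) * ((n.choose k : ℝ) * x ^ k * (1 - x) ^ (n - k)) := by
        rw [Finset.mul_sum, Finset.mul_sum, ← Finset.sum_add_distrib]
        exact Finset.sum_congr rfl fun k _ => by ring
    _ ≤ Delta n x ^ β * 1 + c * (2 * Real.exp 1 * (2 * m).factorial * Delta n x ^ (2 * m)) := by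
        apply add_le_add
        · rw [bern_sum]
        · exact mul_le_mul_of_nonneg_left (moment_bound m n hn x hx0 hx1) hcnn
    _ = (1 + 2 * Real.exp 1 * (2 * m).factorial) * Delta n x ^ β := by
        have hcancel : c * Delta n x ^ (2 * m) = Delta n x ^ β := div_mul_cancel₀ _ hΔ2m.ne'
        have h5 : c * (2 * Real.exp 1 * (2 * m).factorial * Delta n x ^ (2 * m))
            = 2 * Real.exp 1 * (2 * m).factorial * Delta n x ^ β := by
          calc c * (2 * Real.exp 1 * (2 * m).factorial * Delta n x ^ (2 * m))
              = 2 * Real.exp 1 * (2 * m).factorial * (c * Delta n x ^ (2 * m)) := by ring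
            _ = 2 * Real.exp 1 * (2 * m).factorial * Delta n x ^ β := by rw [hcancel]
        rw [mul_one, h5]
        ring
end

section
/- Let D ⊆ [0,1] and let (ψ_n) be a nonincreasing sequence of positive functions on D converging uniformly to 0. A function f admits a sequence of polynomials (g_n), where g_n has nonnegative Bernstein coefficients of degree n, satisfying g_m ⪯_n g_n for all m ≤ n (i.e. g_n − g_m has nonnegative degree-n Bernstein coefficients) and 0 ≤ f(x) − g_n(x) ≤ ψ_n(x) on D, if and only if f(x) = ∑_{n=0}^∞ F_n(x) on D where each F_n is a polynomial with nonnegative degree-n Bernstein coefficients and ∑_{n>N} F_n(x) ≤ ψ_N(x) for all x ∈ D and all N. -/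
/-- `q` has nonnegative degree-`n` Bernstein coefficients. -/
def BPos (n : ℕ) (q : ℝ → ℝ) : Prop :=
  ∃ a : ℕ → ℝ, (∀ k ≤ n, 0 ≤ a k) ∧
    ∀ x : ℝ, q x = ∑ k ∈ Finset.range (n + 1),
      a k * ((n.choose k : ℝ) * x ^ k * (1 - x) ^ (n - k))

lemma BPos.nonneg {n : ℕ} {q : ℝ → ℝ} (h : BPos n q) {x : ℝ}
    (hx : x ∈ Set.Icc (0:ℝ) 1) : 0 ≤ q x := by
  obtain ⟨a, ha, hq⟩ := h
  rw [hq]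
  apply Finset.sum_nonneg
  intro k hk
  have hk' : k ≤ n := Nat.lt_succ_iff.mp (Finset.mem_range.mp hk)
  have h1 : (0:ℝ) ≤ x := hx.1
  have h2 : (0:ℝ) ≤ 1 - x := by linarith [hx.2]
  exact mul_nonneg (ha k hk') (by positivity)

lemma BPos.zero (n : ℕ) : BPos n (fun _ => 0) :=
  ⟨fun _ => 0, fun _ _ => le_refl _, fun x => by simp⟩

lemma BPos.add {n : ℕ} {p q : ℝ → ℝ} (hp : BPos n p) (hq : BPos n q) :
    BPos n (fun x => p x + q x) := by
  obtain ⟨a, ha, hpa⟩ := hp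
  obtain ⟨b, hb, hqb⟩ := hq
  refine ⟨fun k => a k + b k, fun k hk => add_nonneg (ha k hk) (hb k hk), fun x => ?_⟩
  simp only [hpa x, hqb x, ← Finset.sum_add_distrib, add_mul]

lemma BPos.succ {n : ℕ} {q : ℝ → ℝ} (h : BPos n q) : BPos (n + 1) q := by
  obtain ⟨a, ha, hq⟩ := h
  set A : ℕ → ℝ := fun k => if k ≤ n then a k else 0 with hA
  have hAnn : ∀ k, 0 ≤ A k := by
    intro k
    by_cases hk : k ≤ n <;> simp [hA, hk]
    exact ha k hk
  set Nu : ℕ → ℝ := fun k =>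
    (if k = 0 then 0 else A (k - 1) * (n.choose (k - 1) : ℝ)) + A k * (n.choose k : ℝ)
    with hNu
  refine ⟨fun k => Nu k / ((n + 1).choose k : ℝ), ?_, ?_⟩
  · intro k hk
    apply div_nonneg _ (Nat.cast_nonneg _)
    apply add_nonneg
    · by_cases h0 : k = 0
      · simp [h0]
      · rw [if_neg h0]
        exact mul_nonneg (hAnn _) (Nat.cast_nonneg _)
    · exact mul_nonneg (hAnn _) (Nat.cast_nonneg _)
  · intro x
    have hterm : ∀ k ∈ Finset.range (n + 2),
        Nu k / ((n + 1).choose k : ℝ) *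
          (((n + 1).choose k : ℝ) * x ^ k * (1 - x) ^ (n + 1 - k)) =
        Nu k * (x ^ k * (1 - x) ^ (n + 1 - k)) := by
      intro k hk
      have hkle : k ≤ n + 1 := Nat.lt_succ_iff.mp (Finset.mem_range.mp hk)
      have hc : ((n + 1).choose k : ℝ) ≠ 0 := by
        exact_mod_cast (Nat.choose_pos hkle).ne'
      field_simp
    rw [Finset.sum_congr rfl hterm]
    have hsplit : ∀ k, Nu k * (x ^ k * (1 - x) ^ (n + 1 - k)) =
        (if k = 0 then 0 else A (k - 1) * (n.choose (k - 1) : ℝ)) *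
          (x ^ k * (1 - x) ^ (n + 1 - k)) +
        A k * (n.choose k : ℝ) * (x ^ k * (1 - x) ^ (n + 1 - k)) := by
      intro k; rw [hNu]; ring
    simp only [hsplit]
    rw [Finset.sum_add_distrib]
    have S1 : ∑ k ∈ Finset.range (n + 2),
        (if k = 0 then 0 else A (k - 1) * (n.choose (k - 1) : ℝ)) *
          (x ^ k * (1 - x) ^ (n + 1 - k)) = x * q x := by
      rw [Finset.sum_range_succ']
      have h0 : (if (0:ℕ) = 0 then (0:ℝ) else A (0-1) * (n.choose (0-1):ℝ)) *
          (x ^ (0:ℕ) * (1 - x) ^ (n + 1 - 0)) = 0 := by simp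
      rw [h0, add_zero, hq x, Finset.mul_sum]
      apply Finset.sum_congr rfl
      intro k hk
      have hk' : k ≤ n := Nat.lt_succ_iff.mp (Finset.mem_range.mp hk)
      rw [if_neg (Nat.succ_ne_zero k)]
      have e1 : k + 1 - 1 = k := rfl
      have e2 : n + 1 - (k + 1) = n - k := by omega
      rw [e1, e2]
      simp only [hA, if_pos hk']
      ring
    have S2 : ∑ k ∈ Finset.range (n + 2),
        A k * (n.choose k : ℝ) * (x ^ k * (1 - x) ^ (n + 1 - k)) = (1 - x) * q x := by
      rw [Finset.sum_range_succ]
      have : A (n + 1) = 0 := by simp [hA]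
      rw [this]
      simp only [zero_mul, add_zero]
      rw [hq x, Finset.mul_sum]
      apply Finset.sum_congr rfl
      intro k hk
      have hk' : k ≤ n := Nat.lt_succ_iff.mp (Finset.mem_range.mp hk)
      have : n + 1 - k = (n - k) + 1 := by omega
      rw [this]
      simp only [hA, if_pos hk']
      ring
    rw [S1, S2]; ring

lemma BPos.congr {n : ℕ} {p q : ℝ → ℝ} (h : BPos n p) (hpq : ∀ x, p x = q x) :
    BPos n q := by
  obtain ⟨a, ha, hp⟩ := h
  exact ⟨a, ha, fun x => (hpq x) ▸ hp x⟩

theorem stmt_9 (D : Set ℝ) (hD : D ⊆ Set.Icc (0:ℝ) 1)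
    (ψ : ℕ → ℝ → ℝ)
    (hψpos : ∀ n, ∀ x ∈ D, 0 < ψ n x)
    (hψmono : ∀ n, ∀ x ∈ D, ψ (n + 1) x ≤ ψ n x)
    (hψunif : TendstoUniformlyOn (fun n x => ψ n x) 0 Filter.atTop D)
    (f : ℝ → ℝ) :
    (∃ g : ℕ → ℝ → ℝ,
      (∀ n, BPos n (g n)) ∧
      (∀ m n, m ≤ n → BPos n (fun x => g n x - g m x)) ∧
      (∀ n, ∀ x ∈ D, 0 ≤ f x - g n x ∧ f x - g n x ≤ ψ n x)) ↔
    (∃ F : ℕ → ℝ → ℝ,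
      (∀ n, BPos n (F n)) ∧
      (∀ x ∈ D, HasSum (fun n => F n x) (f x)) ∧
      (∀ N : ℕ, ∀ x ∈ D, ∑' n : ℕ, F (N + 1 + n) x ≤ ψ N x)) := by
  constructor
  · rintro ⟨g, hg1, hg2, hg3⟩
    set F : ℕ → ℝ → ℝ := fun n => if n = 0 then g 0 else fun x => g n x - g (n - 1) x
      with hFdef
    have hFB : ∀ n, BPos n (F n) := by
      intro n
      cases n with
      | zero => simpa [hFdef] using hg1 0
      | succ m =>
        have := hg2 m (m + 1) (Nat.le_succ m)
        simpa [hFdef] using this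
    have hFnn : ∀ n, ∀ x ∈ D, 0 ≤ F n x := fun n x hx => (hFB n).nonneg (hD hx)
    have hpart : ∀ N x, ∑ k ∈ Finset.range (N + 1), F k x = g N x := by
      intro N x
      induction N with
      | zero => simp [hFdef]
      | succ m ih =>
        rw [Finset.sum_range_succ, ih]
        simp only [hFdef, if_neg (Nat.succ_ne_zero m), Nat.add_sub_cancel]
        ring
    refine ⟨F, hFB, ?_, ?_⟩
    · intro x hx
      have hψ0 : Filter.Tendsto (fun n => ψ n x) Filter.atTop (nhds 0) := by
        simpa using hψunif.tendsto_at hx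
      have hdiff : Filter.Tendsto (fun N => f x - g N x) Filter.atTop (nhds 0) :=
        squeeze_zero (fun n => (hg3 n x hx).1) (fun n => (hg3 n x hx).2) hψ0
      have hgx : Filter.Tendsto (fun N => g N x) Filter.atTop (nhds (f x)) := by
        have := Filter.Tendsto.sub (tendsto_const_nhds (x := f x) (f := Filter.atTop)) hdiff
        simpa using this
      rw [hasSum_iff_tendsto_nat_of_nonneg (fun i => hFnn i x hx)]
      rw [← Filter.tendsto_add_atTop_iff_nat 1]
      simpa only [hpart] using hgx
    · intro N x hx
      have hs : HasSum (fun n => F n x) (f x) := by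
        have hψ0 : Filter.Tendsto (fun n => ψ n x) Filter.atTop (nhds 0) := by
          simpa using hψunif.tendsto_at hx
        have hdiff : Filter.Tendsto (fun N => f x - g N x) Filter.atTop (nhds 0) :=
          squeeze_zero (fun n => (hg3 n x hx).1) (fun n => (hg3 n x hx).2) hψ0
        have hgx : Filter.Tendsto (fun N => g N x) Filter.atTop (nhds (f x)) := by
          have := Filter.Tendsto.sub (tendsto_const_nhds (x := f x) (f := Filter.atTop)) hdiff
          simpa using this
        rw [hasSum_iff_tendsto_nat_of_nonneg (fun i => hFnn i x hx)]
        rw [← Filter.tendsto_add_atTop_iff_nat 1]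
        simpa only [hpart] using hgx
      have hsum := Summable.sum_add_tsum_nat_add (f := fun n => F n x) (N + 1) hs.summable
      rw [hs.tsum_eq, hpart] at hsum
      have htail : ∑' (n : ℕ), F (N + 1 + n) x = f x - g N x := by
        rw [show (∑' (n : ℕ), F (N + 1 + n) x) = ∑' (n : ℕ), F (n + (N + 1)) x from
          tsum_congr fun n => by rw [Nat.add_comm]]
        linarith
      rw [htail]
      exact (hg3 N x hx).2
  · rintro ⟨F, hF1, hF2, hF3⟩
    refine ⟨fun n x => ∑ k ∈ Finset.range (n + 1), F k x, ?_, ?_, ?_⟩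
    · intro n
      induction n with
      | zero => exact (hF1 0).congr (fun x => by simp)
      | succ m ih =>
        exact (ih.succ.add (hF1 (m + 1))).congr
          (fun x => (Finset.sum_range_succ _ _).symm)
    · intro m n hmn
      induction n, hmn using Nat.le_induction with
      | base => exact (BPos.zero m).congr (fun x => by ring)
      | succ n hn ih =>
        refine (ih.succ.add (hF1 (n + 1))).congr (fun x => ?_)
        simp only [Finset.sum_range_succ]
        ring
    · intro n x hx
      have hs : HasSum (fun k => F k x) (f x) := hF2 x hx
      have hsum := Summable.sum_add_tsum_nat_add (f := fun k => F k x) (n + 1) hs.summable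
      rw [hs.tsum_eq] at hsum
      have htail : ∑' (k : ℕ), F (k + (n + 1)) x =
          f x - ∑ k ∈ Finset.range (n + 1), F k x := by linarith
      constructor
      · rw [show f x - ∑ k ∈ Finset.range (n + 1), F k x =
            ∑' (k : ℕ), F (k + (n + 1)) x from htail.symm]
        exact tsum_nonneg fun k => ((hF1 _).nonneg (hD hx))
      · rw [show f x - ∑ k ∈ Finset.range (n + 1), F k x =
            ∑' (k : ℕ), F (k + (n + 1)) x from htail.symm]
        rw [show (∑' (k : ℕ), F (k + (n + 1)) x) = ∑' (k : ℕ), F (n + 1 + k) x from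
          tsum_congr fun k => by rw [Nat.add_comm]]
        exact hF3 n x hx
end

section
/- If [c,d] ⊆ [a,b] with c < d, then B_n^+[a,b] ⊆ B_n^+[c,d]; that is, every polynomial with nonnegative Bernstein coefficients over [a,b] also has nonnegative Bernstein coefficients of the same degree over any subinterval. -/
def BPosOn (a b : ℝ) (n : ℕ) (q : ℝ → ℝ) : Prop :=
  ∃ c : ℕ → ℝ, (∀ k, 0 ≤ c k) ∧
    ∀ x : ℝ, q x = ∑ k ∈ Finset.range (n + 1), c k * (x - a) ^ k * (b - x) ^ (n - k)

lemma bpos_congr {a b : ℝ} {n : ℕ} {f g : ℝ → ℝ} (h : BPosOn a b n f)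
    (hfg : ∀ x, g x = f x) : BPosOn a b n g := by
  obtain ⟨cf, h1, h2⟩ := h
  exact ⟨cf, h1, fun x => (hfg x).trans (h2 x)⟩

lemma bpos_zero (a b : ℝ) (n : ℕ) : BPosOn a b n (fun _ => 0) :=
  ⟨fun _ => 0, fun _ => le_refl 0, by simp⟩

lemma bpos_add {a b : ℝ} {n : ℕ} {f g : ℝ → ℝ} (hf : BPosOn a b n f)
    (hg : BPosOn a b n g) : BPosOn a b n (fun x => f x + g x) := by
  obtain ⟨cf, hcf, hfx⟩ := hf
  obtain ⟨cg, hcg, hgx⟩ := hg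
  refine ⟨fun k => cf k + cg k, fun k => add_nonneg (hcf k) (hcg k), fun x => ?_⟩
  simp only [hfx x, hgx x, add_mul, ← Finset.sum_add_distrib]

lemma bpos_smul {a b : ℝ} {n : ℕ} {t : ℝ} {f : ℝ → ℝ} (ht : 0 ≤ t)
    (hf : BPosOn a b n f) : BPosOn a b n (fun x => t * f x) := by
  obtain ⟨cf, hcf, hfx⟩ := hf
  refine ⟨fun k => t * cf k, fun k => mul_nonneg ht (hcf k), fun x => ?_⟩
  dsimp only
  rw [hfx x, Finset.mul_sum]
  exact Finset.sum_congr rfl (fun k _ => by ring)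

lemma bpos_mul {a b : ℝ} {m m' : ℕ} {f g : ℝ → ℝ} (hf : BPosOn a b m f)
    (hg : BPosOn a b m' g) : BPosOn a b (m + m') (fun x => f x * g x) := by
  obtain ⟨cf, hcf, hfx⟩ := hf
  obtain ⟨cg, hcg, hgx⟩ := hg
  refine ⟨fun i => ∑ k ∈ Finset.range (m + 1), ∑ j ∈ Finset.range (m' + 1),
      if k + j = i then cf k * cg j else 0, ?_, fun x => ?_⟩
  · intro i
    refine Finset.sum_nonneg fun k _ => Finset.sum_nonneg fun j _ => ?_
    split
    · exact mul_nonneg (hcf k) (hcg j)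
    · exact le_refl 0
  · dsimp only
    rw [hfx x, hgx x, Finset.sum_mul_sum]
    have step : ∀ k ∈ Finset.range (m + 1), ∀ j ∈ Finset.range (m' + 1),
        cf k * (x - a) ^ k * (b - x) ^ (m - k) * (cg j * (x - a) ^ j * (b - x) ^ (m' - j))
        = ∑ i ∈ Finset.range (m + m' + 1),
            if k + j = i then cf k * cg j * (x - a) ^ i * (b - x) ^ (m + m' - i) else 0 := by
      intro k hk j hj
      have hk' : k ≤ m := Nat.lt_succ_iff.mp (Finset.mem_range.mp hk)
      have hj' : j ≤ m' := Nat.lt_succ_iff.mp (Finset.mem_range.mp hj)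
      have hmem : k + j ∈ Finset.range (m + m' + 1) := Finset.mem_range.mpr (by omega)
      rw [Finset.sum_ite_eq (Finset.range (m + m' + 1)) (k + j)
        (fun i => cf k * cg j * (x - a) ^ i * (b - x) ^ (m + m' - i)), if_pos hmem]
      rw [show m + m' - (k + j) = (m - k) + (m' - j) from by omega, pow_add, pow_add]
      ring
    calc ∑ k ∈ Finset.range (m + 1), ∑ j ∈ Finset.range (m' + 1),
          cf k * (x - a) ^ k * (b - x) ^ (m - k) * (cg j * (x - a) ^ j * (b - x) ^ (m' - j))
        = ∑ k ∈ Finset.range (m + 1), ∑ j ∈ Finset.range (m' + 1),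
            ∑ i ∈ Finset.range (m + m' + 1),
              if k + j = i then cf k * cg j * (x - a) ^ i * (b - x) ^ (m + m' - i) else 0 :=
          Finset.sum_congr rfl fun k hk => Finset.sum_congr rfl fun j hj => step k hk j hj
      _ = ∑ k ∈ Finset.range (m + 1), ∑ i ∈ Finset.range (m + m' + 1),
            ∑ j ∈ Finset.range (m' + 1),
              if k + j = i then cf k * cg j * (x - a) ^ i * (b - x) ^ (m + m' - i) else 0 :=
          Finset.sum_congr rfl fun k _ => Finset.sum_comm
      _ = ∑ i ∈ Finset.range (m + m' + 1), ∑ k ∈ Finset.range (m + 1),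
            ∑ j ∈ Finset.range (m' + 1),
              if k + j = i then cf k * cg j * (x - a) ^ i * (b - x) ^ (m + m' - i) else 0 :=
          Finset.sum_comm
      _ = ∑ i ∈ Finset.range (m + m' + 1),
            (∑ k ∈ Finset.range (m + 1), ∑ j ∈ Finset.range (m' + 1),
              if k + j = i then cf k * cg j else 0) * (x - a) ^ i * (b - x) ^ (m + m' - i) := by
          refine Finset.sum_congr rfl fun i _ => ?_
          rw [Finset.sum_mul, Finset.sum_mul]
          refine Finset.sum_congr rfl fun k _ => ?_
          rw [Finset.sum_mul, Finset.sum_mul]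
          exact Finset.sum_congr rfl fun j _ => by
            rw [ite_mul, ite_mul, zero_mul, zero_mul]

lemma bpos_sub_left {a b c d : ℝ} (hac : a ≤ c) (hcd : c < d) :
    BPosOn c d 1 (fun x => x - a) := by
  have hdc : (0:ℝ) < d - c := by linarith
  refine ⟨fun k => if k = 0 then (c - a) / (d - c) else (d - a) / (d - c),
    fun k => ?_, fun x => ?_⟩
  · dsimp only; split <;> exact div_nonneg (by linarith) (le_of_lt hdc)
  · simp [Finset.sum_range_succ]
    field_simp
    ring

lemma bpos_sub_right {a b c d : ℝ} (hcd : c < d) (hdb : d ≤ b) :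
    BPosOn c d 1 (fun x => b - x) := by
  have hdc : (0:ℝ) < d - c := by linarith
  refine ⟨fun k => if k = 0 then (b - c) / (d - c) else (b - d) / (d - c),
    fun k => ?_, fun x => ?_⟩
  · dsimp only; split <;> exact div_nonneg (by linarith) (le_of_lt hdc)
  · simp [Finset.sum_range_succ]
    field_simp
    ring

lemma bpos_pow {c d : ℝ} {f : ℝ → ℝ} (hf : BPosOn c d 1 f) (k : ℕ) :
    BPosOn c d k (fun x => f x ^ k) := by
  induction k with
  | zero => exact ⟨fun _ => 1, fun _ => zero_le_one, fun x => by simp⟩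
  | succ k ih =>
    have := bpos_mul ih hf
    exact bpos_congr this fun x => by rw [pow_succ]

lemma bpos_sum {c d : ℝ} {n : ℕ} (F : ℕ → ℝ → ℝ) (s : Finset ℕ)
    (h : ∀ k ∈ s, BPosOn c d n (F k)) :
    BPosOn c d n (fun x => ∑ k ∈ s, F k x) := by
  induction s using Finset.induction with
  | empty => simpa using bpos_zero c d n
  | insert i s hms ih =>
    refine bpos_congr (bpos_add (h i (Finset.mem_insert_self i s))
      (ih fun k hk => h k (Finset.mem_insert_of_mem hk))) fun x => ?_
    rw [Finset.sum_insert hms]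

theorem stmt_12 (a b c d : ℝ) (hac : a ≤ c) (hcd : c < d) (hdb : d ≤ b)
    (n : ℕ) (q : ℝ → ℝ) (hq : BPosOn a b n q) : BPosOn c d n q := by
  obtain ⟨cf, hcf, hfx⟩ := hq
  refine bpos_congr (bpos_sum (fun k x => cf k * ((x - a) ^ k * (b - x) ^ (n - k)))
    (Finset.range (n + 1)) fun k hk => ?_) fun x => by
      rw [hfx x]; exact Finset.sum_congr rfl fun k _ => by ring
  have hk' : k ≤ n := Nat.lt_succ_iff.mp (Finset.mem_range.mp hk)
  have h1 := bpos_pow (bpos_sub_left hac hcd (b := b)) k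
  have h2 := bpos_pow (bpos_sub_right hcd hdb (a := a)) (n - k)
  have := bpos_mul h1 h2
  rw [show k + (n - k) = n from by omega] at this
  exact bpos_smul (hcf k) this
end

section
/- Let p be a real polynomial of degree n with p(0) > 0 and no complex roots in the closed unit disc {|z| ≤ 1}. Then p ∈ B_n^+[−1,1], i.e. p(x) = ∑_{k=0}^n c_k (x+1)^k (1−x)^{n−k} with all c_k ≥ 0. -/
open Polynomial

private def Rep13 (n : ℕ) (f : ℝ → ℝ) : Prop :=
  ∃ c : ℕ → ℝ, (∀ k, 0 ≤ c k) ∧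
    ∀ x : ℝ, f x = ∑ k ∈ Finset.range (n + 1), c k * (x + 1) ^ k * (1 - x) ^ (n - k)

private lemma Rep13.congr {n : ℕ} {f g : ℝ → ℝ} (hf : Rep13 n f) (h : ∀ x, f x = g x) :
    Rep13 n g := by
  obtain ⟨c, hc0, hc⟩ := hf
  exact ⟨c, hc0, fun x => by rw [← h x]; exact hc x⟩

private lemma Rep13.add {n : ℕ} {f g : ℝ → ℝ} (hf : Rep13 n f) (hg : Rep13 n g) :
    Rep13 n (fun x => f x + g x) := by
  obtain ⟨c, hc0, hc⟩ := hf; obtain ⟨d, hd0, hd⟩ := hg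
  refine ⟨fun k => c k + d k, fun k => add_nonneg (hc0 k) (hd0 k), fun x => ?_⟩
  dsimp only
  rw [hc x, hd x, ← Finset.sum_add_distrib]
  exact Finset.sum_congr rfl fun k _ => by ring

private lemma Rep13.smul {n : ℕ} {f : ℝ → ℝ} (hf : Rep13 n f) (a : ℝ) (ha : 0 ≤ a) :
    Rep13 n (fun x => a * f x) := by
  obtain ⟨c, hc0, hc⟩ := hf
  refine ⟨fun k => a * c k, fun k => mul_nonneg ha (hc0 k), fun x => ?_⟩
  dsimp only
  rw [hc x, Finset.mul_sum]
  exact Finset.sum_congr rfl fun k _ => by ring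

private lemma Rep13.mulL {n : ℕ} {f : ℝ → ℝ} (hf : Rep13 n f) :
    Rep13 (n + 1) (fun x => (1 - x) * f x) := by
  obtain ⟨c, hc0, hc⟩ := hf
  refine ⟨fun k => if k ≤ n then c k else 0,
    fun k => by dsimp only; split_ifs with h; exacts [hc0 k, le_refl 0], fun x => ?_⟩
  dsimp only
  rw [Finset.sum_range_succ, if_neg (by omega), hc x, Finset.mul_sum, zero_mul, zero_mul,
    add_zero]
  refine Finset.sum_congr rfl fun k hk => ?_
  rw [Finset.mem_range] at hk
  rw [if_pos (by omega), show n + 1 - k = (n - k) + 1 from by omega, pow_succ]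
  ring

private lemma Rep13.mulR {n : ℕ} {f : ℝ → ℝ} (hf : Rep13 n f) :
    Rep13 (n + 1) (fun x => (x + 1) * f x) := by
  obtain ⟨c, hc0, hc⟩ := hf
  refine ⟨fun k => if k = 0 then 0 else c (k - 1),
    fun k => by dsimp only; split_ifs; exacts [le_refl 0, hc0 _], fun x => ?_⟩
  dsimp only
  rw [Finset.sum_range_succ', hc x, Finset.mul_sum]
  norm_num
  refine Finset.sum_congr rfl fun k hk => ?_
  rw [Finset.mem_range] at hk
  rw [show n + 1 - (k + 1) = n - k from by omega]
  ring

private lemma Rep13.linear_pos {n : ℕ} {f : ℝ → ℝ} {r : ℝ} (hr : 1 < r) (hf : Rep13 n f) :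
    Rep13 (n + 1) (fun x => (r - x) * f x) := by
  have h := (hf.mulL.smul ((r + 1) / 2) (by linarith)).add
    (hf.mulR.smul ((r - 1) / 2) (by linarith))
  exact h.congr fun x => by ring

private lemma Rep13.linear_neg {n : ℕ} {f : ℝ → ℝ} {r : ℝ} (hr : r < -1) (hf : Rep13 n f) :
    Rep13 (n + 1) (fun x => (x - r) * f x) := by
  have h := (hf.mulL.smul ((-r - 1) / 2) (by linarith)).add
    (hf.mulR.smul ((1 - r) / 2) (by linarith))
  exact h.congr fun x => by ring

private lemma Rep13.quadratic {n : ℕ} {f : ℝ → ℝ} {a s : ℝ} (ha : a ^ 2 ≤ s) (hs : 1 < s)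
    (hf : Rep13 n f) : Rep13 (n + 1 + 1) (fun x => (x ^ 2 - 2 * a * x + s) * f x) := by
  have h := ((hf.mulL.mulL.smul ((1 + 2 * a + s) / 4) (by nlinarith [sq_nonneg (1 + a)])).add
    (hf.mulR.mulL.smul ((s - 1) / 2) (by linarith))).add
    (hf.mulR.mulR.smul ((1 - 2 * a + s) / 4) (by nlinarith [sq_nonneg (1 - a)]))
  exact h.congr fun x => by ring

private lemma main13 : ∀ n : ℕ, ∀ p : Polynomial ℝ, p.natDegree = n → 0 < p.eval 0 →
    (∀ z : ℂ, ‖z‖ ≤ 1 → Polynomial.aeval z p ≠ 0) →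
    Rep13 n (fun x => p.eval x) := by
  intro n
  induction n using Nat.strong_induction_on with
  | _ n ih =>
  intro p hdeg h0 hroots
  have hp0 : p ≠ 0 := fun h => by simp [h] at h0
  have haev : ∀ x : ℝ, Polynomial.aeval (x : ℂ) p = ((p.eval x : ℝ) : ℂ) := fun x => by
    simpa using Polynomial.aeval_algebraMap_apply_eq_algebraMap_eval (A := ℂ) x p
  rcases Nat.eq_zero_or_pos n with hn0 | hnpos
  · subst hn0
    refine ⟨fun _ => p.coeff 0, fun k => ?_, fun x => ?_⟩
    · rw [← Polynomial.coeff_zero_eq_eval_zero] at h0; exact h0.le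
    · rw [Polynomial.eq_C_of_natDegree_eq_zero hdeg]
      simp
  by_cases hreal : ∃ r : ℝ, p.eval r = 0
  · obtain ⟨r, hr⟩ := hreal
    have habs : 1 < |r| := by
      by_contra h
      push_neg at h
      refine hroots (r : ℂ) (by simpa using h) ?_
      rw [haev r, hr, Complex.ofReal_zero]
    obtain ⟨q, hq⟩ := Polynomial.dvd_iff_isRoot.mpr hr
    have hq0 : q ≠ 0 := fun h => hp0 (by rw [hq, h, mul_zero])
    have hnd : n = q.natDegree + 1 := by
      rw [← hdeg, hq, Polynomial.natDegree_mul (Polynomial.X_sub_C_ne_zero r) hq0,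
        Polynomial.natDegree_X_sub_C]
      omega
    have hev : ∀ x : ℝ, p.eval x = (x - r) * q.eval x := fun x => by rw [hq]; simp
    have haevq : ∀ z : ℂ, Polynomial.aeval z p = (z - (r : ℂ)) * Polynomial.aeval z q :=
      fun z => by rw [hq]; simp
    have hqroots : ∀ z : ℂ, ‖z‖ ≤ 1 → Polynomial.aeval z q ≠ 0 := by
      intro z hz h
      exact hroots z hz (by rw [haevq z, h, mul_zero])
    have h0' : 0 < -r * q.eval 0 := by
      have := hev 0
      rw [this] at h0
      linarith [h0]
    rcases lt_abs.mp habs with hr1 | hr1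
    · -- r > 1
      have hq0' : 0 < (-q).eval 0 := by
        rw [Polynomial.eval_neg]
        nlinarith
      have hrep := ih q.natDegree (by omega) (-q) (Polynomial.natDegree_neg q) hq0'
        (by intro z hz h; rw [map_neg, neg_eq_zero] at h; exact hqroots z hz h)
      rw [hnd]
      exact (hrep.linear_pos hr1).congr fun x => by
        rw [hev x, Polynomial.eval_neg]; ring
    · -- r < -1
      have hr1' : r < -1 := by linarith
      have hq0' : 0 < q.eval 0 := by nlinarith
      have hrep := ih q.natDegree (by omega) q rfl hq0' hqroots
      rw [hnd]
      exact (hrep.linear_neg hr1').congr fun x => by rw [hev x]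
  · push_neg at hreal
    have hdegC : 0 < (p.map (algebraMap ℝ ℂ)).degree := by
      rw [Polynomial.degree_map]
      exact Polynomial.natDegree_pos_iff_degree_pos.mp (by omega)
    obtain ⟨z, hz⟩ := Complex.exists_root hdegC
    have haevz : Polynomial.aeval z p = 0 := by
      rwa [Polynomial.aeval_def, ← Polynomial.eval_map]
    have habs : 1 < ‖z‖ := lt_of_not_ge fun h => hroots z h haevz
    have him : z.im ≠ 0 := by
      intro h
      apply hreal z.re
      have hz' : (z.re : ℂ) = z := by
        apply Complex.ext <;> simp [h]
      have := haev z.re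
      rw [hz', haevz] at this
      exact_mod_cast this.symm
    set a : ℝ := z.re with ha_def
    set s : ℝ := Complex.normSq z with hs_def
    have hs1 : 1 < s := by
      have := Complex.sq_norm z
      nlinarith
    have ha2 : a ^ 2 ≤ s := by
      rw [hs_def, Complex.normSq_apply]
      nlinarith [sq_nonneg z.im]
    set q2 : Polynomial ℝ := X ^ 2 + C (-(2 * a)) * X + C s with hq2_def
    have hq2monic : q2.Monic := by
      rw [hq2_def]
      monicity!
    have hq2map : q2.map (algebraMap ℝ ℂ) =
        (X - C z) * (X - C ((starRingEnd ℂ) z)) := by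
      have e1 : ((2 * a : ℝ) : ℂ) = z + (starRingEnd ℂ) z := by
        rw [Complex.add_conj]
      have e2 : ((s : ℝ) : ℂ) = z * (starRingEnd ℂ) z := (Complex.mul_conj z).symm
      rw [hq2_def]
      simp only [Polynomial.map_add, Polynomial.map_mul, Polynomial.map_pow,
        Polynomial.map_X, Polynomial.map_C]
      rw [show ((algebraMap ℝ ℂ) (-(2 * a))) = -(z + (starRingEnd ℂ) z) by
        simp only [Complex.coe_algebraMap]; rw [← e1]; push_cast; ring,
        show ((algebraMap ℝ ℂ) s) = z * (starRingEnd ℂ) z by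
        simp only [Complex.coe_algebraMap]; rw [← e2]]
      rw [Polynomial.C_neg, Polynomial.C_add, Polynomial.C_mul]
      ring
    have hdvdC : q2.map (algebraMap ℝ ℂ) ∣ p.map (algebraMap ℝ ℂ) := by
      obtain ⟨Q, hQ⟩ := Polynomial.dvd_iff_isRoot.mpr hz
      have hconj : (p.map (algebraMap ℝ ℂ)).eval ((starRingEnd ℂ) z) = 0 := by
        rw [Polynomial.eval_map, ← Polynomial.aeval_def, Polynomial.aeval_conj, haevz,
          map_zero]
      rw [hQ] at hconj
      simp only [Polynomial.eval_mul, Polynomial.eval_sub, Polynomial.eval_X,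
        Polynomial.eval_C] at hconj
      have hne : (starRingEnd ℂ) z - z ≠ 0 := by
        rw [sub_ne_zero]
        intro h
        exact him ((Complex.conj_eq_iff_im).mp h)
      have hQroot : Q.eval ((starRingEnd ℂ) z) = 0 := by
        rcases mul_eq_zero.mp hconj with h | h
        · exact absurd h hne
        · exact h
      obtain ⟨R, hR⟩ := Polynomial.dvd_iff_isRoot.mpr hQroot
      exact ⟨R, by rw [hQ, hR, hq2map]; ring⟩
    have hdvd : q2 ∣ p :=
      (Polynomial.map_dvd_map (algebraMap ℝ ℂ) (algebraMap ℝ ℂ).injective hq2monic).mp hdvdC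
    obtain ⟨q, hq⟩ := hdvd
    have hq0 : q ≠ 0 := fun h => hp0 (by rw [hq, h, mul_zero])
    have hq2nd : q2.natDegree = 2 := by
      rw [hq2_def]
      compute_degree!
    have hnd : n = q.natDegree + 1 + 1 := by
      rw [← hdeg, hq, Polynomial.natDegree_mul hq2monic.ne_zero hq0, hq2nd]
      omega
    have hq2ev : ∀ x : ℝ, q2.eval x = x ^ 2 - 2 * a * x + s := fun x => by
      rw [hq2_def]
      simp only [Polynomial.eval_add, Polynomial.eval_mul, Polynomial.eval_pow,
        Polynomial.eval_X, Polynomial.eval_C]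
      ring
    have hev : ∀ x : ℝ, p.eval x = (x ^ 2 - 2 * a * x + s) * q.eval x := fun x => by
      rw [hq, Polynomial.eval_mul, hq2ev]
    have haevq : ∀ w : ℂ, Polynomial.aeval w p =
        ((w - z) * (w - (starRingEnd ℂ) z)) * Polynomial.aeval w q := by
      intro w
      rw [hq, map_mul]
      congr 1
      rw [Polynomial.aeval_def, ← Polynomial.eval_map, hq2map]
      simp
    have hqroots : ∀ w : ℂ, ‖w‖ ≤ 1 → Polynomial.aeval w q ≠ 0 := by
      intro w hw h
      exact hroots w hw (by rw [haevq w, h, mul_zero])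
    have hq0' : 0 < q.eval 0 := by
      have := hev 0
      rw [this] at h0
      nlinarith
    have hrep := ih q.natDegree (by omega) q rfl hq0' hqroots
    rw [hnd]
    exact (hrep.quadratic ha2 hs1).congr fun x => (hev x).symm

theorem stmt_13 (n : ℕ) (p : Polynomial ℝ) (hdeg : p.natDegree = n)
    (h0 : 0 < p.eval 0)
    (hroots : ∀ z : ℂ, ‖z‖ ≤ 1 → Polynomial.aeval z p ≠ 0) :
    ∃ c : ℕ → ℝ, (∀ k, 0 ≤ c k) ∧
      ∀ x : ℝ, p.eval x = ∑ k ∈ Finset.range (n + 1), c k * (x + 1) ^ k * (1 - x) ^ (n - k) := by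
  exact main13 n p hdeg h0 hroots
end

section
/- Let P_{2n}(z) := ∑_{k=0}^n (−1)^k z^{2k}/k! be the degree-2n Taylor polynomial of e^{−z²} at 0. Then P_{2n} has no roots in the closed disc {|z| ≤ √n/e}; moreover |e^{−z²} − P_{2n}(z)| < e^{−n} for all |z| ≤ √n/e. -/
/-- Degree-`2n` Taylor polynomial of `exp (-z^2)` at `0`. -/
noncomputable def P (n : ℕ) (z : ℂ) : ℂ :=
  ∑ k ∈ Finset.range (n + 1), (-1 : ℂ) ^ k * z ^ (2 * k) / (Nat.factorial k : ℂ)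

lemma P_eq (n : ℕ) (z : ℂ) :
    P n z = ∑ k ∈ Finset.range (n + 1), (-z ^ 2) ^ k / (Nat.factorial k : ℂ) := by
  unfold P
  refine Finset.sum_congr rfl fun k _ => ?_
  rw [neg_pow, pow_mul]
  ring

lemma term_bound (n m : ℕ) (hm : n + 1 ≤ m) (r : ℝ) (hr0 : 0 ≤ r)
    (hr : r ≤ n / Real.exp 1 ^ 2) :
    r ^ m / (Nat.factorial m : ℝ) ≤ (Real.exp 1)⁻¹ ^ m := by
  have hmpos : 0 < m := by omega
  have hfac : 0 < (Nat.factorial m : ℝ) := by positivity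
  have he : (0:ℝ) < Real.exp 1 := Real.exp_pos 1
  have h1 : (m:ℝ) ^ m / (Nat.factorial m : ℝ) ≤ Real.exp m := by
    simpa using Real.pow_div_factorial_le_exp (x := (m:ℝ)) (by positivity) m
  have hmr : (0:ℝ) < m := by exact_mod_cast hmpos
  -- 1/m! ≤ e^m / m^m
  have hinv : (1:ℝ) / (Nat.factorial m : ℝ) ≤ Real.exp m / (m:ℝ) ^ m := by
    rw [div_le_div_iff₀ hfac (by positivity)]
    calc (1:ℝ) * (m:ℝ)^m = (m:ℝ)^m / (Nat.factorial m) * Nat.factorial m := by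
          field_simp
      _ ≤ Real.exp m * Nat.factorial m := by
          exact mul_le_mul_of_nonneg_right h1 hfac.le
  have hrm : r ^ m ≤ ((n:ℝ) / Real.exp 1 ^ 2) ^ m := pow_le_pow_left₀ hr0 hr m
  have hexpm : Real.exp (m:ℝ) = Real.exp 1 ^ m := by
    rw [← Real.exp_nat_mul]; ring_nf
  calc r ^ m / (Nat.factorial m : ℝ)
      ≤ ((n:ℝ) / Real.exp 1 ^ 2) ^ m * (Real.exp m / (m:ℝ) ^ m) := by
        rw [div_eq_mul_one_div]
        exact mul_le_mul hrm hinv (by positivity) (by positivity)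
    _ = ((n:ℝ) / Real.exp 1 ^ 2 * (Real.exp 1 / m)) ^ m := by
        rw [mul_pow, hexpm, div_pow (Real.exp 1)]
    _ = ((n:ℝ) / (Real.exp 1 * m)) ^ m := by
        congr 1
        field_simp
    _ ≤ (Real.exp 1)⁻¹ ^ m := by
        apply pow_le_pow_left₀ (by positivity)
        rw [inv_eq_one_div, div_le_div_iff₀ (by positivity) he]
        have : (n:ℝ) ≤ m := by exact_mod_cast Nat.le_of_succ_le hm
        nlinarith

theorem stmt_15 (n : ℕ) (hn : 1 ≤ n) (z : ℂ)
    (hz : ‖z‖ ≤ Real.sqrt n / Real.exp 1) :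
    P n z ≠ 0 ∧ ‖Complex.exp (-z ^ 2) - P n z‖ < Real.exp (-(n : ℝ)) := by
  set w : ℂ := -z ^ 2 with hw
  set r : ℝ := ‖z‖ ^ 2 with hrdef
  have he : (0:ℝ) < Real.exp 1 := Real.exp_pos 1
  have he2 : (2:ℝ) < Real.exp 1 := by
    have := Real.exp_one_gt_d9; nlinarith
  have habsw : ‖w‖ = r := by
    simp [hw, hrdef, map_pow]
  have hr0 : 0 ≤ r := by positivity
  have hr : r ≤ n / Real.exp 1 ^ 2 := by
    have h0 : (0:ℝ) ≤ Real.sqrt n / Real.exp 1 := by positivity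
    have := pow_le_pow_left₀ (norm_nonneg z) hz 2
    rw [div_pow, Real.sq_sqrt (by positivity : (0:ℝ) ≤ (n:ℝ))] at this
    exact this
  have hsum : Summable fun k : ℕ => w ^ k / (k.factorial : ℂ) :=
    NormedSpace.expSeries_div_summable w
  have hexp : Complex.exp w = ∑' k : ℕ, w ^ k / (k.factorial : ℂ) := by
    rw [Complex.exp_eq_exp_ℂ, NormedSpace.exp_eq_tsum_div]
  have hsplit : Complex.exp w - P n z
      = ∑' k : ℕ, w ^ (k + (n+1)) / ((k + (n+1)).factorial : ℂ) := by
    rw [hexp, P_eq]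
    have := Summable.sum_add_tsum_nat_add (f := fun k : ℕ => w ^ k / (k.factorial : ℂ)) (n+1) hsum
    rw [← this]
    ring
  -- norm estimates
  have hnormsum : Summable fun k : ℕ => ‖w ^ (k + (n+1)) / ((k + (n+1)).factorial : ℂ)‖ := by
    exact (summable_nat_add_iff
      (f := fun k : ℕ => ‖w ^ k / (k.factorial : ℂ)‖) (n+1)).2
      (NormedSpace.norm_expSeries_div_summable w)
  have hgeo : Summable fun k : ℕ =>
      (Real.exp 1)⁻¹ ^ (n+1) * (Real.exp 1)⁻¹ ^ k := by
    apply Summable.mul_left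
    apply summable_geometric_of_lt_one (by positivity)
    rw [inv_lt_one_iff₀]; right; linarith
  have hterm : ∀ k : ℕ, ‖w ^ (k + (n+1)) / ((k + (n+1)).factorial : ℂ)‖
      ≤ (Real.exp 1)⁻¹ ^ (n+1) * (Real.exp 1)⁻¹ ^ k := by
    intro k
    have : ‖w ^ (k + (n+1)) / ((k + (n+1)).factorial : ℂ)‖
        = r ^ (k + (n+1)) / ((k + (n+1)).factorial : ℝ) := by
      rw [norm_div, norm_pow]
      simp [habsw, Complex.norm_natCast]
    rw [this]
    calc r ^ (k + (n+1)) / ((k + (n+1)).factorial : ℝ)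
        ≤ (Real.exp 1)⁻¹ ^ (k + (n+1)) :=
          term_bound n (k + (n+1)) (by omega) r hr0 hr
      _ = (Real.exp 1)⁻¹ ^ (n+1) * (Real.exp 1)⁻¹ ^ k := by
          rw [pow_add]; ring
  have hbound : ‖Complex.exp w - P n z‖
      ≤ (Real.exp 1)⁻¹ ^ (n+1) * (1 - (Real.exp 1)⁻¹)⁻¹ := by
    rw [hsplit]
    calc ‖∑' k : ℕ, w ^ (k + (n+1)) / ((k + (n+1)).factorial : ℂ)‖
        ≤ ∑' k : ℕ, ‖w ^ (k + (n+1)) / ((k + (n+1)).factorial : ℂ)‖ :=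
          norm_tsum_le_tsum_norm hnormsum
      _ ≤ ∑' k : ℕ, (Real.exp 1)⁻¹ ^ (n+1) * (Real.exp 1)⁻¹ ^ k :=
          Summable.tsum_le_tsum hterm hnormsum hgeo
      _ = (Real.exp 1)⁻¹ ^ (n+1) * (1 - (Real.exp 1)⁻¹)⁻¹ := by
          rw [tsum_mul_left, tsum_geometric_of_lt_one (by positivity)
            (by rw [inv_lt_one_iff₀]; right; linarith)]
  have hkey : (Real.exp 1)⁻¹ ^ (n+1) * (1 - (Real.exp 1)⁻¹)⁻¹ < Real.exp (-(n:ℝ)) := by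
    have hexpn : Real.exp (-(n:ℝ)) = (Real.exp 1)⁻¹ ^ n := by
      rw [inv_pow, ← Real.exp_nat_mul, ← Real.exp_neg]
      ring_nf
    rw [hexpn, pow_succ]
    have hpos : (0:ℝ) < (Real.exp 1)⁻¹ ^ n := by positivity
    have h1 : (0:ℝ) < 1 - (Real.exp 1)⁻¹ := by
      rw [sub_pos, inv_lt_one_iff₀]; right; linarith
    rw [mul_assoc, mul_comm ((Real.exp 1)⁻¹ ^ n)]
    nth_rewrite 2 [← one_mul ((Real.exp 1)⁻¹ ^ n)]
    apply mul_lt_mul_of_pos_right _ hpos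
    have hcalc : (Real.exp 1)⁻¹ * (1 - (Real.exp 1)⁻¹)⁻¹ = (Real.exp 1 - 1)⁻¹ := by
      rw [← mul_inv]
      congr 1
      field_simp
    rw [hcalc, inv_lt_one_iff₀]
    right; linarith
  have hmain : ‖Complex.exp w - P n z‖ < Real.exp (-(n:ℝ)) :=
    lt_of_le_of_lt hbound hkey
  refine ⟨?_, hmain⟩
  -- nonvanishing
  have hlower : Real.exp (-(n:ℝ)) < ‖Complex.exp w‖ := by
    rw [Complex.norm_exp]
    apply Real.exp_lt_exp.2
    have h1 : w.re = -(z^2).re := by simp [hw]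
    have h2 : (z^2).re ≤ r := by
      calc (z^2).re ≤ ‖z^2‖ := Complex.re_le_norm _
        _ = r := by simp [hrdef, map_pow]
    have h3 : r < n := by
      have : (n:ℝ) / Real.exp 1 ^ 2 < n := by
        apply div_lt_self (by exact_mod_cast hn) 
        nlinarith
      linarith
    rw [h1]
    linarith
  intro hP
  rw [hP, sub_zero] at hmain
  linarith
end

section
/- Let Υ(x) := (x(1−x))^{α/2} for α ∈ (0,2). There is a constant c_α such that for all x ∈ (0,1) and 0 ≤ t ≤ min{x, 1−x}, (Υ(x+t) + Υ(x−t))/2 ≥ Υ(x)·(1 − c_α t²/min{x,1−x}²). -/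
open Real

lemma bern_key {s u : ℝ} (hs : 0 < s) (hs1 : s ≤ 1) (hu : -(3/4 : ℝ) ≤ u) :
    1 + s * u - 2 * u ^ 2 ≤ (1 + u) ^ s := by
  have h1 : (0:ℝ) < 1 + u := by linarith
  have hb : (1 + u) ^ (1 - s) ≤ 1 + (1 - s) * u := by
    have := rpow_one_add_le_one_add_mul_self (s := u) (p := 1 - s) (by linarith) (by linarith)
      (by linarith)
    linarith [this]
  have hbpos : (0:ℝ) < (1 + u) ^ (1 - s) := rpow_pos_of_pos h1 _
  have hid : (1 + u) ^ s = (1 + u) / (1 + u) ^ (1 - s) := by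
    rw [eq_div_iff (ne_of_gt hbpos), ← Real.rpow_add h1]
    norm_num
  rw [hid, le_div_iff₀ hbpos]
  calc (1 + s * u - 2 * u ^ 2) * (1 + u) ^ (1 - s)
      ≤ max 0 (1 + s * u - 2 * u ^ 2) * (1 + (1 - s) * u) := by
        rcases le_or_gt (1 + s * u - 2 * u ^ 2) 0 with h | h
        · calc (1 + s * u - 2 * u ^ 2) * (1 + u) ^ (1 - s) ≤ 0 :=
                mul_nonpos_of_nonpos_of_nonneg h hbpos.le
            _ ≤ _ := by
                apply mul_nonneg (le_max_left _ _); nlinarith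
        · rw [max_eq_right h.le]
          exact mul_le_mul_of_nonneg_left hb h.le
    _ ≤ 1 + u := by
        rcases le_or_gt (1 + s * u - 2 * u ^ 2) 0 with h | h
        · rw [max_eq_left h]; nlinarith
        · rw [max_eq_right h.le]
          nlinarith [mul_nonneg (mul_nonneg (sq_nonneg u) (by linarith : (0:ℝ) ≤ 1 - s)) (by linarith : (0:ℝ) ≤ u + 3/4), mul_nonneg hs.le (sq_nonneg u), sq_nonneg (s*u), sq_nonneg u]

/-- numerator bounds : for `|h| ≤ 1`, `0 ≤ t ≤ 1/8`, the quantity `t*h - t^2`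
    is at least `-(3/2)*t` and has square at most `(81/64)*t^2`. -/
lemma num_bound {h t : ℝ} (ht0 : 0 ≤ t) (ht8 : t ≤ 1/8) (hh : -1 ≤ h) (hh1 : h ≤ 1) :
    -((3/2) * t) ≤ t * h - t ^ 2 ∧ (t * h - t ^ 2) ^ 2 ≤ (81/64) * t ^ 2 := by
  have ht2 : t ^ 2 ≤ (1/8) * t := by
    have h1 : t * t ≤ t * (1/8) := mul_le_mul_of_nonneg_left ht8 ht0
    have e : t ^ 2 = t * t := pow_two t
    linarith
  have hub : t * h ≤ t := by
    have h1 : t * h ≤ t * 1 := mul_le_mul_of_nonneg_left hh1 ht0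
    linarith
  have hlb : -t ≤ t * h := by
    have h1 : t * (-1) ≤ t * h := mul_le_mul_of_nonneg_left hh ht0
    linarith
  have ha : 0 ≤ (9/8) * t - (t * h - t ^ 2) := by linarith [sq_nonneg t]
  have hb : 0 ≤ (9/8) * t + (t * h - t ^ 2) := by linarith
  refine ⟨by linarith, ?_⟩
  nlinarith [mul_nonneg ha hb]

set_option maxHeartbeats 1000000 in
theorem stmt_17 (α : ℝ) (hα : α ∈ Set.Ioo (0:ℝ) 2) :
    ∃ c : ℝ, ∀ x ∈ Set.Ioo (0:ℝ) 1, ∀ t : ℝ, 0 ≤ t → t ≤ min x (1 - x) →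
      (((x + t) * (1 - (x + t))) ^ (α / 2) + ((x - t) * (1 - (x - t))) ^ (α / 2)) / 2
        ≥ (x * (1 - x)) ^ (α / 2) * (1 - c * t ^ 2 / (min x (1 - x)) ^ 2) := by
  obtain ⟨hα0, hα2⟩ := hα
  refine ⟨100, ?_⟩
  intro x hx t ht0 htm
  obtain ⟨hx0, hx1⟩ := hx
  set s := α / 2 with hsdef
  have hs0 : 0 < s := by rw [hsdef]; linarith
  have hs1 : s ≤ 1 := by rw [hsdef]; linarith
  set m := min x (1 - x) with hmdef
  have hmx : m ≤ x := min_le_left _ _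
  have hmx' : m ≤ 1 - x := min_le_right _ _
  have hm0 : 0 < m := lt_min hx0 (by linarith)
  have hm2 : m ≤ 1 / 2 := by linarith
  set p := x * (1 - x) with hpdef
  have hp0 : 0 < p := mul_pos hx0 (by linarith)
  have hpm : m / 2 ≤ p := by
    rcases le_total x (1 / 2) with h | h
    · have h1 : x * (1/2) ≤ x * (1 - x) := by
        apply mul_le_mul_of_nonneg_left (by linarith) hx0.le
      rw [hpdef]; linarith
    · have h1 : (1/2) * (1 - x) ≤ x * (1 - x) := by
        apply mul_le_mul_of_nonneg_right (by linarith) (by linarith)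
      rw [hpdef]; linarith
  clear_value s m p
  have htm' : t ≤ m := htm
  have hA0 : 0 ≤ (x + t) * (1 - (x + t)) := mul_nonneg (by linarith) (by linarith)
  have hB0 : 0 ≤ (x - t) * (1 - (x - t)) := mul_nonneg (by linarith) (by linarith)
  rcases le_or_gt (4 * t) m with hcase | hcase
  · -- main case : t ≤ m / 4
    have ht8 : t ≤ 1 / 8 := by linarith
    have h2tp : 2 * t ≤ p := by linarith
    set N := t * (1 - 2 * x) - t ^ 2 with hNdef
    set M := -(t * (1 - 2 * x)) - t ^ 2 with hMdef
    have hNb := num_bound (h := 1 - 2 * x) ht0 ht8 (by linarith) (by linarith)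
    have hMb := num_bound (h := -(1 - 2 * x)) ht0 ht8 (by linarith) (by linarith)
    have hNlb : -((3/2) * t) ≤ N := by rw [hNdef]; exact hNb.1
    have hN2 : N ^ 2 ≤ (81/64) * t ^ 2 := by rw [hNdef]; exact hNb.2
    have hMlb : -((3/2) * t) ≤ M := by
      rw [hMdef]; have := hMb.1; linarith [hMb.1]
    have hM2 : M ^ 2 ≤ (81/64) * t ^ 2 := by
      have e : M = t * (-(1 - 2*x)) - t ^ 2 := by rw [hMdef]; ring
      rw [e]; exact hMb.2
    set uA := N / p with huAdef
    set uB := M / p with huBdef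
    clear_value N M uA uB
    have hpx : (0:ℝ) < x * (1 - x) := mul_pos hx0 (by linarith)
    have hAe : (x + t) * (1 - (x + t)) = p * (1 + uA) := by
      rw [huAdef, hNdef, hpdef]
      field_simp [hpx.ne']
      ring
    have hBe : (x - t) * (1 - (x - t)) = p * (1 + uB) := by
      rw [huBdef, hMdef, hpdef]
      field_simp [hpx.ne']
      ring
    have huA_lb : -(3/4 : ℝ) ≤ uA := by
      rw [huAdef, le_div_iff₀ hp0]; linarith [hNlb, h2tp]
    have huB_lb : -(3/4 : ℝ) ≤ uB := by
      rw [huBdef, le_div_iff₀ hp0]; linarith [hMlb, h2tp]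
    have h1uA : (0:ℝ) ≤ 1 + uA := by linarith
    have h1uB : (0:ℝ) ≤ 1 + uB := by linarith
    have huAB : uA + uB = -(2 * t ^ 2) / p := by
      rw [huAdef, huBdef, ← add_div]; congr 1; rw [hNdef, hMdef]; ring
    have hm2p : m ^ 2 ≤ p := by
      have h1 : m * m ≤ m * (1/2) := mul_le_mul_of_nonneg_left hm2 hm0.le
      have e : m ^ 2 = m * m := sq m
      linarith
    have hp2 : m ^ 2 / 4 ≤ p ^ 2 := by
      have h1 := pow_le_pow_left₀ (by linarith : (0:ℝ) ≤ m / 2) hpm 2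
      have e : (m / 2) ^ 2 = m ^ 2 / 4 := by ring
      linarith
    rw [show (100:ℝ) * t ^ 2 / m ^ 2 = 100 * (t ^ 2 / m ^ 2) by ring]
    set T := t ^ 2 / m ^ 2 with hTdef
    have hT0 : 0 ≤ T := by rw [hTdef]; exact div_nonneg (sq_nonneg t) (sq_nonneg m)
    have hT6 : 6 * t ^ 2 / m ^ 2 = 6 * T := by rw [hTdef]; ring
    have hT2 : 2 * t ^ 2 / m ^ 2 = 2 * T := by rw [hTdef]; ring
    have huA2' : uA ^ 2 ≤ 6 * t ^ 2 / m ^ 2 := by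
      rw [huAdef, div_pow, div_le_div_iff₀ (pow_pos hp0 2) (pow_pos hm0 2)]
      have h1 := mul_le_mul_of_nonneg_right hN2 (sq_nonneg m)
      have h2 := mul_le_mul_of_nonneg_left hp2 (sq_nonneg t)
      linarith [sq_nonneg (t * p)]
    have huA2 : uA ^ 2 ≤ 6 * T := hT6 ▸ huA2'
    have huB2' : uB ^ 2 ≤ 6 * t ^ 2 / m ^ 2 := by
      rw [huBdef, div_pow, div_le_div_iff₀ (pow_pos hp0 2) (pow_pos hm0 2)]
      have h1 := mul_le_mul_of_nonneg_right hM2 (sq_nonneg m)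
      have h2 := mul_le_mul_of_nonneg_left hp2 (sq_nonneg t)
      linarith [sq_nonneg (t * p)]
    have huB2 : uB ^ 2 ≤ 6 * T := hT6 ▸ huB2'
    have hA1' : -(2 * t ^ 2 / m ^ 2) ≤ s * (uA + uB) := by
      have e1 : s * (uA + uB) = -(s * (2 * t ^ 2 / p)) := by rw [huAB]; ring
      have e2 : 2 * t ^ 2 / p ≤ 2 * t ^ 2 / m ^ 2 := by
        rw [div_le_div_iff₀ hp0 (pow_pos hm0 2)]
        have h1 := mul_le_mul_of_nonneg_left hm2p (by positivity : (0:ℝ) ≤ 2 * t ^ 2)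
        linarith
      have e3 : (0:ℝ) ≤ 2 * t ^ 2 / p := div_nonneg (by positivity) hp0.le
      have e4 : s * (2 * t ^ 2 / p) ≤ 2 * t ^ 2 / p := by
        have := mul_le_of_le_one_left e3 hs1
        linarith
      linarith [e1.le, e1.ge]
    have hA1 : -(2 * T) ≤ s * (uA + uB) := by rw [← hT2]; exact hA1'
    have hq : (0:ℝ) ≤ p ^ s := rpow_nonneg hp0.le s
    have wA := bern_key hs0 hs1 huA_lb
    have wB := bern_key hs0 hs1 huB_lb
    have harith : 1 - 100 * T
        ≤ 1 + (s * (uA + uB) - 2 * uA ^ 2 - 2 * uB ^ 2) / 2 := by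
      linarith [hA1, huA2, huB2, hT0]
    rw [ge_iff_le, hAe, hBe, Real.mul_rpow hp0.le h1uA, Real.mul_rpow hp0.le h1uB]
    calc p ^ s * (1 - 100 * T)
        ≤ p ^ s * (1 + (s * (uA + uB) - 2 * uA ^ 2 - 2 * uB ^ 2) / 2) :=
          mul_le_mul_of_nonneg_left harith hq
      _ ≤ (p ^ s * (1 + uA) ^ s + p ^ s * (1 + uB) ^ s) / 2 := by
          have hwA := mul_le_mul_of_nonneg_left wA hq
          have hwB := mul_le_mul_of_nonneg_left wB hq
          linarith
  · -- easy case : m < 4 t, the RHS is nonpositive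
    have hL : 0 ≤ (((x + t) * (1 - (x + t))) ^ s + ((x - t) * (1 - (x - t))) ^ s) / 2 := by
      have := rpow_nonneg hA0 s
      have := rpow_nonneg hB0 s
      linarith
    have hfac : 1 - 100 * t ^ 2 / m ^ 2 ≤ 0 := by
      have h1 : (1:ℝ) ≤ 100 * t ^ 2 / m ^ 2 := by
        rw [le_div_iff₀ (pow_pos hm0 2)]
        have h2 : m * m < (4 * t) * (4 * t) :=
          mul_self_lt_mul_self hm0.le hcase
        linarith [h2, sq_nonneg t]
      linarith
    have hR : p ^ s * (1 - 100 * t ^ 2 / m ^ 2) ≤ 0 :=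
      mul_nonpos_of_nonneg_of_nonpos (rpow_nonneg hp0.le s) hfac
    linarith
end

section
/- Fix h ∈ (0,1), m ≥ 1, and define f_{h,m}(x) := ∑_{ℓ∈ℤ} e^{−π ℓ²/h²} e^{−2πi ℓ x √m / h} (a real-valued absolutely convergent sum). Then: (a) |f_{h,m}(x) − 1| ≤ 4 e^{−π/h²} for all x; and (b) f_{h,m}(0) − f_{h,m}(h/(2√m)) ≥ 4 e^{−π/h²}. -/
/-- The real-valued function `f_{h,m}`, written via its absolutely convergent
Fourier series: the terms for `ℓ` and `-ℓ` combine to cosines. -/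
noncomputable def fhm (h : ℝ) (m : ℕ) (x : ℝ) : ℝ :=
  ∑' ℓ : ℤ, Real.exp (-(Real.pi * (ℓ : ℝ) ^ 2 / h ^ 2)) *
    Real.cos (2 * Real.pi * (ℓ : ℝ) * x * Real.sqrt m / h)

theorem stmt_19 (h : ℝ) (hh : h ∈ Set.Ioo (0:ℝ) 1) (m : ℕ) (hm : 1 ≤ m) :
    (∀ x : ℝ, |fhm h m x - 1| ≤ 4 * Real.exp (-(Real.pi / h ^ 2))) ∧
    fhm h m 0 - fhm h m (h / (2 * Real.sqrt m)) ≥ 4 * Real.exp (-(Real.pi / h ^ 2)) := by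
  obtain ⟨h0, h1⟩ := hh
  have h2 : (0:ℝ) < h ^ 2 := by positivity
  have hπ := Real.pi_pos
  set r : ℝ := Real.exp (-(Real.pi / h ^ 2)) with hr_def
  have hr0 : 0 < r := Real.exp_pos _
  have hh2 : h ^ 2 ≤ 1 := by nlinarith
  have hπle : Real.pi ≤ Real.pi / h ^ 2 := by
    rw [le_div_iff₀ h2]
    nlinarith [mul_le_mul_of_nonneg_left hh2 hπ.le]
  have hr_half : r ≤ 2⁻¹ := by
    have h1le : (1:ℝ) ≤ Real.pi / h ^ 2 := le_trans (by linarith [Real.pi_gt_three]) hπle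
    have hre : r ≤ Real.exp (-1) := Real.exp_le_exp.mpr (by linarith)
    have h2e : (2:ℝ) ≤ Real.exp 1 := by
      have := Real.add_one_le_exp 1; linarith
    rw [Real.exp_neg] at hre
    calc r ≤ (Real.exp 1)⁻¹ := hre
      _ ≤ 2⁻¹ := by
        apply inv_anti₀ (by norm_num) h2e
  have hr1 : r < 1 := lt_of_le_of_lt hr_half (by norm_num)
  set g : ℤ → ℝ := fun ℓ => Real.exp (-(Real.pi * (ℓ : ℝ) ^ 2 / h ^ 2)) with hg_def
  have hg_pos : ∀ ℓ, 0 < g ℓ := fun ℓ => Real.exp_pos _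
  have hg_neg : ∀ ℓ : ℤ, g (-ℓ) = g ℓ := by intro ℓ; simp [hg_def]
  have hg_le : ∀ n : ℕ, g (n : ℤ) ≤ r ^ n := by
    intro n
    rw [hg_def, hr_def, ← Real.exp_nat_mul]
    apply Real.exp_le_exp.mpr
    have hn : (n:ℝ) ≤ (n:ℝ) ^ 2 := by
      rcases Nat.eq_zero_or_pos n with h0n | h0n
      · simp [h0n]
      · have : (1:ℝ) ≤ (n:ℝ) := by exact_mod_cast h0n
        nlinarith
    have e1 : (n:ℝ) * -(Real.pi / h ^ 2) = -(Real.pi * n / h ^ 2) := by ring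
    rw [e1]
    push_cast
    rw [neg_le_neg_iff]
    gcongr
  have hsum_r : Summable (fun n : ℕ => r ^ n) := summable_geometric_of_lt_one hr0.le hr1
  have key : ∀ (c : ℤ → ℝ), (∀ ℓ, |c ℓ| ≤ 1) → Summable (fun ℓ : ℤ => g ℓ * c ℓ) := by
    intro c hc
    apply Summable.of_nat_of_neg
    · apply Summable.of_norm_bounded hsum_r
      intro n
      simp only [Real.norm_eq_abs, abs_mul, abs_of_pos (hg_pos _)]
      calc g (n:ℤ) * |c n| ≤ g (n:ℤ) * 1 := by
            apply mul_le_mul_of_nonneg_left (hc _) (hg_pos _).le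
        _ ≤ r ^ n := by rw [mul_one]; exact hg_le n
    · apply Summable.of_norm_bounded hsum_r
      intro n
      simp only [Real.norm_eq_abs, abs_mul, abs_of_pos (hg_pos _)]
      calc g (-(n:ℤ)) * |c (-(n:ℤ))| ≤ g (-(n:ℤ)) * 1 := by
            apply mul_le_mul_of_nonneg_left (hc _) (hg_pos _).le
        _ ≤ r ^ n := by rw [mul_one, hg_neg]; exact hg_le n
  have hsumg : Summable g := by
    have := key (fun _ => 1) (by simp)
    simpa using this
  -- tail estimate machinery
  have hsum_rr : Summable (fun n : ℕ => r * r ^ n) := hsum_r.mul_left r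
  have tsum_rr : ∑' n : ℕ, r * r ^ n = r * (1 - r)⁻¹ := by
    rw [tsum_mul_left, tsum_geometric_of_lt_one hr0.le hr1]
  have hrr2 : r * (1 - r)⁻¹ ≤ 2 * r := by
    have h12 : (2:ℝ)⁻¹ ≤ 1 - r := by linarith
    have hinv : (1 - r)⁻¹ ≤ 2 := by
      have := inv_anti₀ (by norm_num : (0:ℝ) < 2⁻¹) h12
      simpa using this
    calc r * (1 - r)⁻¹ ≤ r * 2 := by
          apply mul_le_mul_of_nonneg_left hinv hr0.le
      _ = 2 * r := by ring
  have tail : ∀ F : ℕ → ℝ, (∀ n, |F n| ≤ r * r ^ n) → Summable F ∧ |∑' n, F n| ≤ 2 * r := by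
    intro F hF
    have hs : Summable F := Summable.of_norm_bounded hsum_rr (by simpa using hF)
    refine ⟨hs, ?_⟩
    calc |∑' n, F n| ≤ ∑' n, |F n| := by
          have h1 : Summable fun n => ‖F n‖ := hs.abs
          simpa [Real.norm_eq_abs] using norm_tsum_le_tsum_norm h1
      _ ≤ ∑' n : ℕ, r * r ^ n := Summable.tsum_le_tsum hF hs.abs hsum_rr
      _ = r * (1 - r)⁻¹ := tsum_rr
      _ ≤ 2 * r := hrr2
  have gsucc_le : ∀ n : ℕ, g ((n:ℤ) + 1) ≤ r * r ^ n := by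
    intro n
    have := hg_le (n + 1)
    push_cast at this
    calc g ((n:ℤ) + 1) ≤ r ^ (n + 1) := this
      _ = r * r ^ n := by rw [pow_succ]; ring
  constructor
  · intro x
    set T : ℤ → ℝ := fun ℓ =>
      g ℓ * Real.cos (2 * Real.pi * (ℓ : ℝ) * x * Real.sqrt m / h) with hT_def
    have hfx : fhm h m x = ∑' ℓ, T ℓ := rfl
    have hT_abs : ∀ ℓ : ℤ, |T ℓ| ≤ g ℓ := by
      intro ℓ
      rw [hT_def]
      simp only [abs_mul, abs_of_pos (hg_pos ℓ)]
      calc g ℓ * |Real.cos _| ≤ g ℓ * 1 :=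
            mul_le_mul_of_nonneg_left (Real.abs_cos_le_one _) (hg_pos ℓ).le
        _ = g ℓ := mul_one _
    have hsumT : Summable T := key _ (fun ℓ => by
      have := Real.abs_cos_le_one (2 * Real.pi * (ℓ : ℝ) * x * Real.sqrt m / h)
      exact this)
    have hT0 : T 0 = 1 := by simp [hT_def, hg_def]
    have hF1 : ∀ n : ℕ, |T ((n:ℤ) + 1)| ≤ r * r ^ n := fun n =>
      le_trans (hT_abs _) (gsucc_le n)
    have hF2 : ∀ n : ℕ, |T (-((n:ℤ) + 1))| ≤ r * r ^ n := fun n => by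
      have := hT_abs (-((n:ℤ) + 1))
      rw [show g (-((n:ℤ)+1)) = g ((n:ℤ)+1) from hg_neg _] at this
      exact le_trans this (gsucc_le n)
    obtain ⟨hs1, hb1⟩ := tail _ hF1
    obtain ⟨hs2, hb2⟩ := tail _ hF2
    have hsnat : Summable (fun n : ℕ => T (n : ℤ)) := hsumT.comp_injective (Nat.cast_injective)
    have hsplit : ∑' ℓ : ℤ, T ℓ = (∑' n : ℕ, T (n : ℤ)) + ∑' n : ℕ, T (-((n:ℤ) + 1)) := by
      exact tsum_of_nat_of_neg_add_one hsnat hs2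
    have hsplit0 : ∑' n : ℕ, T (n : ℤ) = 1 + ∑' n : ℕ, T ((n:ℤ) + 1) := by
      rw [Summable.tsum_eq_zero_add hsnat]
      rw [show T ((0:ℕ):ℤ) = 1 from hT0]
      congr 1
    have : fhm h m x - 1 = (∑' n : ℕ, T ((n:ℤ) + 1)) + ∑' n : ℕ, T (-((n:ℤ) + 1)) := by
      rw [hfx, hsplit, hsplit0]; ring
    rw [this]
    calc |(∑' n : ℕ, T ((n:ℤ) + 1)) + ∑' n : ℕ, T (-((n:ℤ) + 1))|
        ≤ |∑' n : ℕ, T ((n:ℤ) + 1)| + |∑' n : ℕ, T (-((n:ℤ) + 1))| := abs_add_le _ _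
      _ ≤ 2 * r + 2 * r := add_le_add hb1 hb2
      _ = 4 * r := by ring
  · have hm0 : (0:ℝ) < Real.sqrt m := Real.sqrt_pos.mpr (by exact_mod_cast hm)
    have hb1 : fhm h m 0 = ∑' ℓ, g ℓ := by
      unfold fhm
      apply tsum_congr
      intro ℓ
      simp [hg_def]
    have hcos : ∀ ℓ : ℤ, Real.cos (2 * Real.pi * (ℓ : ℝ) * (h / (2 * Real.sqrt m)) *
        Real.sqrt m / h) = (-1 : ℝ) ^ ℓ := by
      intro ℓ
      have harg : 2 * Real.pi * (ℓ : ℝ) * (h / (2 * Real.sqrt m)) * Real.sqrt m / h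
          = (ℓ : ℝ) * Real.pi := by
        field_simp
      rw [harg]
      have := Real.cos_int_mul_pi_sub 0 ℓ
      simpa using this
    have hb2 : fhm h m (h / (2 * Real.sqrt m)) = ∑' ℓ : ℤ, g ℓ * (-1 : ℝ) ^ ℓ := by
      unfold fhm
      apply tsum_congr
      intro ℓ
      rw [← hcos ℓ]
    have habs1 : ∀ ℓ : ℤ, |(-1 : ℝ) ^ ℓ| ≤ 1 := by
      intro ℓ
      rcases Int.even_or_odd ℓ with he | ho
      · rw [he.neg_one_zpow]; norm_num
      · rw [ho.neg_one_zpow]; norm_num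
    have hsum2 : Summable (fun ℓ : ℤ => g ℓ * (-1 : ℝ) ^ ℓ) := key _ habs1
    have hdiff : fhm h m 0 - fhm h m (h / (2 * Real.sqrt m))
        = ∑' ℓ : ℤ, (g ℓ - g ℓ * (-1 : ℝ) ^ ℓ) := by
      rw [hb1, hb2, Summable.tsum_sub hsumg hsum2]
    have hnonneg : ∀ ℓ : ℤ, 0 ≤ g ℓ - g ℓ * (-1 : ℝ) ^ ℓ := by
      intro ℓ
      have h1 : ((-1 : ℝ)) ^ ℓ ≤ 1 := le_of_abs_le (habs1 ℓ)
      nlinarith [hg_pos ℓ]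
    have hsumd : Summable (fun ℓ : ℤ => g ℓ - g ℓ * (-1 : ℝ) ^ ℓ) := hsumg.sub hsum2
    have hfin : ∑ ℓ ∈ ({1, -1} : Finset ℤ), (g ℓ - g ℓ * (-1 : ℝ) ^ ℓ) = 4 * r := by
      rw [Finset.sum_pair (by decide : (1:ℤ) ≠ -1)]
      have e1 : g 1 = r := by norm_num [hg_def, hr_def]
      have e2 : g (-1) = r := by norm_num [hg_def, hr_def]
      rw [e1, e2]
      norm_num
      ring
    rw [ge_iff_le, hdiff, ← hfin]
    exact Summable.sum_le_tsum _ (fun ℓ _ => hnonneg ℓ) hsumd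
end
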